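/- With the Hankel-column notation above (columns c_j ∈ K^n built from a sequence (s_j)), the alternating sum ∑_{j=0}^{n} (−1)^j det[c_0 ⋯ ĉ_j ⋯ c_n ; bottom row (s_{j+1}, …, ŝ_{2j+1}, …, s_{n+j+1})] = 0, where each summand is the (n+1)×(n+1) determinant whose first n rows are the Hankel columns c_0, …, c_n with c_j omitted, and whose last row consists of s_{k+j+1} in the column originally indexed k (k ≠ j). -/

import Mathlib

namespace HankelAux

open Matrix

variable {K : Type*} [CommRing K]

/-- The `(m+2) × (m+2)` matrix whose first `m` rows are Hankel rows of `s` and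
whose last two rows are `u` and `v`. -/
def B (s : ℕ → K) (m : ℕ) (u v : Fin (m + 2) → K) :
    Matrix (Fin (m + 2)) (Fin (m + 2)) K :=
  Matrix.of fun i c =>
    if (i : ℕ) < m then s ((c : ℕ) + (i : ℕ))
    else if (i : ℕ) = m then u c else v c

def p (m : ℕ) : Fin (m + 2) := ⟨m, by omega⟩
def q (m : ℕ) : Fin (m + 2) := ⟨m + 1, by omega⟩

lemma pq_ne (m : ℕ) : p m ≠ q m := by
  simp [p, q, Fin.ext_iff]

lemma B_apply_p (s : ℕ → K) (m : ℕ) (u v : Fin (m + 2) → K) (c : Fin (m + 2)) :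
    B s m u v (p m) c = u c := by
  simp [B, p]

lemma B_apply_q (s : ℕ → K) (m : ℕ) (u v : Fin (m + 2) → K) (c : Fin (m + 2)) :
    B s m u v (q m) c = v c := by
  simp [B, q]

lemma B_swap (s : ℕ → K) (m : ℕ) (u v : Fin (m + 2) → K) :
    (B s m v u).det = -(B s m u v).det := by
  have h : B s m v u = (B s m u v).submatrix (Equiv.swap (p m) (q m)) id := by
    ext i c
    rcases eq_or_ne i (p m) with rfl | hip
    · rw [submatrix_apply, Equiv.swap_apply_left, id, B_apply_p, B_apply_q]
    rcases eq_or_ne i (q m) with rfl | hiq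
    · rw [submatrix_apply, Equiv.swap_apply_right, id, B_apply_q, B_apply_p]
    · rw [submatrix_apply, Equiv.swap_apply_of_ne_of_ne hip hiq, id]
      have hi : (i : ℕ) < m := by
        have h1 : (i : ℕ) ≠ m := fun h => hip (Fin.ext h)
        have h2 : (i : ℕ) ≠ m + 1 := fun h => hiq (Fin.ext h)
        omega
      simp [B, hi]
  rw [h, det_permute, Equiv.Perm.sign_swap (pq_ne m)]
  simp

lemma B_diag (s : ℕ → K) (m : ℕ) (u : Fin (m + 2) → K) :
    (B s m u u).det = 0 := by
  refine det_zero_of_row_eq (pq_ne m) (funext fun c => ?_)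
  rw [B_apply_p, B_apply_q]

lemma det_updateRow_sum' {ι α : Type*} [DecidableEq ι] [Fintype ι]
    (A : Matrix ι ι K) (r : ι) (t : Finset α) (f : α → ι → K) :
    (A.updateRow r (∑ a ∈ t, f a)).det = ∑ a ∈ t, (A.updateRow r (f a)).det := by
  classical
  induction t using Finset.induction_on with
  | empty =>
      simp only [Finset.sum_empty]
      exact det_eq_zero_of_row_eq_zero r (fun c => by simp)
  | insert _ _ h ih =>
      rw [Finset.sum_insert h, det_updateRow_add, ih, Finset.sum_insert h]

lemma B_linear (s : ℕ → K) (m : ℕ) (u v : Fin (m + 2) → K) :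
    (B s m u v).det = ∑ c : Fin (m + 2), v c * (B s m u (Pi.single c 1)).det := by
  have hupd : ∀ w : Fin (m + 2) → K, B s m u w = (B s m u 0).updateRow (q m) w := by
    intro w
    ext i c
    rcases eq_or_ne i (q m) with rfl | hiq
    · rw [updateRow_self, B_apply_q]
    · rw [updateRow_ne hiq]
      have hi : (i : ℕ) ≠ m + 1 := fun h => hiq (Fin.ext h)
      have : (i : ℕ) < m ∨ (i : ℕ) = m := by omega
      rcases this with h | h <;> simp [B, h]
  have hv : v = ∑ c : Fin (m + 2), Pi.single c (v c) := by
    rw [Finset.univ_sum_single]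
  calc (B s m u v).det
      = ((B s m u 0).updateRow (q m) (∑ c : Fin (m + 2), Pi.single c (v c))).det := by
        rw [← hv, ← hupd]
    _ = ∑ c : Fin (m + 2), ((B s m u 0).updateRow (q m) (Pi.single c (v c))).det :=
        det_updateRow_sum' _ _ _ _
    _ = ∑ c : Fin (m + 2), v c * (B s m u (Pi.single c 1)).det := by
        refine Finset.sum_congr rfl fun c _ => ?_
        have hsingle : (Pi.single c (v c) : Fin (m + 2) → K)
            = v c • (Pi.single c (1 : K) : Fin (m + 2) → K) := by
          funext x
          rcases eq_or_ne x c with rfl | hx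
          · simp
          · simp [Pi.single_eq_of_ne hx]
        rw [hsingle, det_updateRow_smul, ← hupd]

lemma succAbove_val {m : ℕ} (j : Fin (m + 2)) (k : Fin (m + 1)) :
    ((j.succAbove k : Fin (m + 2)) : ℕ) =
      if (k : ℕ) < (j : ℕ) then (k : ℕ) else (k : ℕ) + 1 := by
  rcases lt_or_ge (k : ℕ) (j : ℕ) with h | h
  · rw [Fin.succAbove, if_pos (by simpa [Fin.lt_def] using h), if_pos h]
    simp
  · rw [Fin.succAbove, if_neg (by simpa [Fin.lt_def, not_lt] using h), if_neg (by omega)]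
    simp

lemma collapse (s : ℕ → K) (m : ℕ) (j : Fin (m + 2)) :
    (Matrix.of fun i k : Fin (m + 1) =>
        if (i : ℕ) < m then
          s ((if (k : ℕ) < (j : ℕ) then (k : ℕ) else (k : ℕ) + 1) + (i : ℕ))
        else
          s ((if (k : ℕ) < (j : ℕ) then (k : ℕ) else (k : ℕ) + 1) + (j : ℕ) + 1)).det
    = (-1 : K) ^ (m + (j : ℕ)) *
        (B s m (Pi.single j 1) (fun c => s ((c : ℕ) + (j : ℕ) + 1))).det := by
  rw [det_succ_row (B s m (Pi.single j 1) (fun c => s ((c : ℕ) + (j : ℕ) + 1))) (p m)]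
  rw [Finset.sum_eq_single j]
  · rw [B_apply_p, Pi.single_eq_same, mul_one]
    have hval : ((p m : Fin (m + 2)) : ℕ) = m := rfl
    rw [hval, ← mul_assoc, ← pow_add,
      show m + (j : ℕ) + (m + (j : ℕ)) = 2 * (m + (j : ℕ)) by ring,
      pow_mul, neg_one_sq, one_pow, one_mul]
    congr 1
    ext i k
    rw [Matrix.of_apply, submatrix_apply]
    have hrow : ((p m).succAbove i : ℕ) = if (i : ℕ) < m then (i : ℕ) else (i : ℕ) + 1 := by
      have := succAbove_val (p m) i
      exact this
    have hcol := succAbove_val j k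
    rcases lt_or_ge (i : ℕ) m with hi | hi
    · have h1 : ((p m).succAbove i : ℕ) = (i : ℕ) := by rw [hrow, if_pos hi]
      simp only [B, Matrix.of_apply, h1, if_pos hi, hcol]
    · have him : (i : ℕ) = m := by omega
      have h1 : ((p m).succAbove i : ℕ) = m + 1 := by rw [hrow, if_neg (by omega), him]
      simp only [B, Matrix.of_apply, h1, hcol]
      split_ifs <;> first | omega | (congr 1; omega) | rfl
  · intro k _ hk
    rw [B_apply_p, Pi.single_eq_of_ne hk, mul_zero, zero_mul]
  · intro h
    exact absurd (Finset.mem_univ j) h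

end HankelAux

/-- The vanishing alternating sum of the appendix: with Hankel columns
`c_k = (s_k, …, s_{k+n-2})ᵀ`, the sum
`∑_{j=0}^{n} (−1)ʲ det [c₀ ⋯ ĉⱼ ⋯ cₙ ; (s_{k+j+1})ₖ] = 0`,
where each summand is the `n × n` determinant whose first `n − 1` rows come from
the columns `c₀, …, cₙ` with `cⱼ` omitted and whose last row has entry `s_{c+j+1}`
in the column originally indexed `c`. -/
theorem hankel_alternating_sum {K : Type*} [CommRing K] (s : ℕ → K) (n : ℕ) (hn : 1 ≤ n) :
    ∑ j : Fin (n + 1), (-1 : K) ^ (j : ℕ) *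
      (Matrix.of fun i k : Fin n =>
        if (i : ℕ) < n - 1 then
          s ((if (k : ℕ) < (j : ℕ) then (k : ℕ) else (k : ℕ) + 1) + (i : ℕ))
        else
          s ((if (k : ℕ) < (j : ℕ) then (k : ℕ) else (k : ℕ) + 1) + (j : ℕ) + 1)).det
      = 0 := by
  open HankelAux in
  obtain ⟨m, rfl⟩ : ∃ m, n = m + 1 := ⟨n - 1, by omega⟩
  simp only [Nat.add_sub_cancel]
  have step : ∀ j : Fin (m + 2),
      (-1 : K) ^ (j : ℕ) *
        (Matrix.of fun i k : Fin (m + 1) =>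
          if (i : ℕ) < m then
            s ((if (k : ℕ) < (j : ℕ) then (k : ℕ) else (k : ℕ) + 1) + (i : ℕ))
          else
            s ((if (k : ℕ) < (j : ℕ) then (k : ℕ) else (k : ℕ) + 1) + (j : ℕ) + 1)).det
      = (-1 : K) ^ m *
          ∑ c : Fin (m + 2), s ((c : ℕ) + (j : ℕ) + 1) *
            (B s m (Pi.single j 1) (Pi.single c 1)).det := by
    intro j
    rw [collapse s m j, ← mul_assoc]
    have hsign : (-1 : K) ^ (j : ℕ) * (-1 : K) ^ (m + (j : ℕ)) = (-1 : K) ^ m := by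
      rw [pow_add, ← mul_assoc, mul_comm ((-1 : K) ^ (j : ℕ)), mul_assoc, ← pow_add,
        ← two_mul, pow_mul]
      simp
    rw [hsign, B_linear]
  rw [Finset.sum_congr rfl fun j _ => step j, ← Finset.mul_sum]
  have key : ∑ j : Fin (m + 2), ∑ c : Fin (m + 2),
      s ((c : ℕ) + (j : ℕ) + 1) * (B s m (Pi.single j 1) (Pi.single c 1)).det = 0 := by
    rw [← Finset.sum_product']
    refine Finset.sum_ninvolution (fun x => (x.2, x.1)) ?_ ?_ (fun x => Finset.mem_univ _)
      (fun x => rfl)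
    · rintro ⟨j, c⟩
      simp only
      rcases eq_or_ne j c with rfl | hjc
      · rw [B_diag]
        ring
      · rw [B_swap]
        have : (c : ℕ) + (j : ℕ) + 1 = (j : ℕ) + (c : ℕ) + 1 := by omega
        rw [this]
        ring
    · rintro ⟨j, c⟩ hne h
      have h1 : c = j := congrArg Prod.fst h
      apply hne
      show s ((c : ℕ) + (j : ℕ) + 1) * (B s m (Pi.single j 1) (Pi.single c 1)).det = 0
      rw [h1, B_diag, mul_zero]
  rw [key, mul_zero]
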